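/- Consider the constrained incremental problem u_{k+1} ∈ argmin{F_n(t_{k+1}, u) + (1/(2τ))|u − u_k|²_{L²₊} : u ∈ H¹₀} where |w|_{L²₊} = ‖w‖_{L²} if w ≥ 0 and +∞ otherwise. Then the minimizer satisfies u_{k+1} ≥ u_k, the identity ‖u_{k+1} − u_k‖²_{L²}/τ² = −dF_n(t_{k+1}, u_{k+1})[(u_{k+1} − u_k)/τ], and ‖(u_{k+1} − u_k)/τ‖_{L²} = |∂F_n|_{L²₊}(t_{k+1}, u_{k+1}), where |∂F_n|_{L²₊}(t, w) = sup{−dF_n(t,w)[z] : z ∈ H¹₀, z ≥ 0, ‖z‖_{L²} ≤ 1}. -/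

import Mathlib

open MeasureTheory
open scoped Classical

lemma lp_smul_nonneg {α : Type*} [MeasurableSpace α] {μ : Measure α} {c : ℝ} (hc : 0 ≤ c)
    {f : Lp ℝ 2 μ} (hf : 0 ≤ f) : 0 ≤ c • f := by
  rw [← Lp.coeFn_nonneg] at hf ⊢
  filter_upwards [hf, Lp.coeFn_smul c f] with x hx hsx
  rw [hsx]; exact smul_nonneg hc hx

lemma aux_small (L Q : ℝ) (h : ∀ s : ℝ, 0 < s → s ≤ 1 → 0 ≤ L + s * Q) : 0 ≤ L := by
  by_contra hL
  push_neg at hL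
  have hQ : (0:ℝ) ≤ |Q| := abs_nonneg Q
  set s := min 1 (-L / (2 * (|Q| + 1))) with hs
  have hs0 : 0 < s := lt_min one_pos (div_pos (by linarith) (by positivity))
  have h2 := h s hs0 (min_le_left _ _)
  have h3 : s ≤ -L / (2 * (|Q| + 1)) := min_le_right _ _
  have h4 : s * Q ≤ s * |Q| := mul_le_mul_of_nonneg_left (le_abs_self Q) hs0.le
  have h5 : s * |Q| ≤ (-L / (2 * (|Q| + 1))) * |Q| := mul_le_mul_of_nonneg_right h3 hQ
  have h6 : (-L / (2 * (|Q| + 1))) * |Q| < -L := by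
    rw [div_mul_eq_mul_div, div_lt_iff₀ (by positivity)]
    nlinarith
  linarith


set_option maxHeartbeats 1000000 in
/-- One step of the constrained incremental problem
`u₁ ∈ argmin { F(u) + (1/2τ)|u − u₀|²_{L²₊} : u ∈ H¹₀ }`, where `|w|_{L²₊} = ‖w‖_{L²}` if
`w ≥ 0` and `+∞` otherwise (the constrained functional takes values in `ℝ ∪ {+∞}`).  The
minimizer satisfies `u₁ ≥ u₀`, the identity
`‖u₁ − u₀‖²/τ² = −dF(u₁)[(u₁ − u₀)/τ]`, and
`‖(u₁ − u₀)/τ‖_{L²} = |∂F|_{L²₊}(u₁) = sup { −dF(u₁)[z] : z ∈ H¹₀, z ≥ 0, ‖z‖_{L²} ≤ 1 }`,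
with `F(w) = ½a(w,w) − ⟨g, w⟩` and `dF(w)[z] = a(w,z) − ⟨g, z⟩`.
`H¹₀` is a normed space `V` embedded in `L²` by `ι`. -/
theorem constrained_incremental_step
    {α : Type*} [MeasurableSpace α] (μ : Measure α)
    {V : Type*} [NormedAddCommGroup V] [NormedSpace ℝ V]
    (ι : V →L[ℝ] Lp ℝ 2 μ)
    (a : V →L[ℝ] V →L[ℝ] ℝ) (hsymm : ∀ u v : V, a u v = a v u)
    (τ : ℝ) (hτ : 0 < τ) (g : Lp ℝ 2 μ) (u₀ u₁ : V)
    (hmin : ∀ w : V,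
      (if ι u₀ ≤ ι u₁ then
          (((1/2) * a u₁ u₁ - (inner ℝ g (ι u₁) : ℝ) +
            (1/(2*τ)) * ‖ι u₁ - ι u₀‖ ^ 2 : ℝ) : WithTop ℝ)
        else ⊤) ≤
      (if ι u₀ ≤ ι w then
          (((1/2) * a w w - (inner ℝ g (ι w) : ℝ) +
            (1/(2*τ)) * ‖ι w - ι u₀‖ ^ 2 : ℝ) : WithTop ℝ)
        else ⊤)) :
    ι u₀ ≤ ι u₁ ∧
    ‖ι u₁ - ι u₀‖ ^ 2 / τ ^ 2 =
      -(a u₁ (τ⁻¹ • (u₁ - u₀)) - (inner ℝ g (ι (τ⁻¹ • (u₁ - u₀))) : ℝ)) ∧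
    ‖τ⁻¹ • (ι u₁ - ι u₀)‖ =
      sSup {r : ℝ | ∃ z : V, 0 ≤ ι z ∧ ‖ι z‖ ≤ 1 ∧
        r = -(a u₁ z - (inner ℝ g (ι z) : ℝ))} := by
  -- Step 1: the minimizer is admissible
  have h0 : ι u₀ ≤ ι u₁ := by
    by_contra h
    have h1 := hmin u₀
    rw [if_neg h, if_pos le_rfl] at h1
    exact WithTop.not_top_le_coe _ h1
  set d : Lp ℝ 2 μ := ι u₁ - ι u₀ with hd
  have hd0 : 0 ≤ d := sub_nonneg.mpr h0
  -- Step 2: the variational inequality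
  have key : ∀ z : V, 0 ≤ ι (z - u₁) + d →
      0 ≤ (a u₁ (z - u₁) - (inner ℝ g (ι (z - u₁)) : ℝ))
        + τ⁻¹ * (inner ℝ d (ι (z - u₁)) : ℝ) := by
    intro w hw
    set h : V := w - u₁ with hh
    apply aux_small _ (((1:ℝ)/2) * a h h + (1/(2*τ)) * ‖ι h‖^2)
    intro s hs0 hs1
    have hv : ι u₀ ≤ ι (u₁ + s • h) := by
      rw [← sub_nonneg]
      have heq : ι (u₁ + s • h) - ι u₀ = (1 - s) • d + s • (ι h + d) := by
        simp only [map_add, _root_.map_smul, hd]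
        module
      rw [heq]
      exact add_nonneg (lp_smul_nonneg (by linarith) hd0) (lp_smul_nonneg hs0.le hw)
    have hle := hmin (u₁ + s • h)
    rw [if_pos h0, if_pos hv, WithTop.coe_le_coe] at hle
    have e1 : a (u₁ + s • h) (u₁ + s • h)
        = a u₁ u₁ + 2 * s * a u₁ h + s^2 * a h h := by
      simp only [map_add, _root_.map_smul, ContinuousLinearMap.add_apply,
        ContinuousLinearMap.coe_smul', Pi.smul_apply, smul_eq_mul, hsymm h u₁]
      ring
    have e2 : (inner ℝ g (ι (u₁ + s • h)) : ℝ) = inner ℝ g (ι u₁) + s * inner ℝ g (ι h) := by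
      simp only [map_add, _root_.map_smul, inner_add_right, inner_smul_right]
    have e3 : ι (u₁ + s • h) - ι u₀ = d + s • ι h := by
      simp only [map_add, _root_.map_smul, hd]; abel
    have e4 : ‖d + s • ι h‖^2
        = ‖d‖^2 + 2 * (s * (inner ℝ d (ι h) : ℝ)) + s^2 * ‖ι h‖^2 := by
      rw [@norm_add_sq_real, inner_smul_right, norm_smul]
      simp [mul_pow, sq_abs]
    rw [e1, e2, e3, e4] at hle
    have hfact : s * ((a u₁ h - (inner ℝ g (ι h) : ℝ) + τ⁻¹ * (inner ℝ d (ι h) : ℝ))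
          + s * (((1:ℝ)/2) * a h h + (1/(2*τ)) * ‖ι h‖^2))
        = (1/2 * (a u₁ u₁ + 2 * s * a u₁ h + s^2 * a h h)
            - ((inner ℝ g (ι u₁) : ℝ) + s * inner ℝ g (ι h))
            + 1/(2*τ) * (‖d‖^2 + 2 * (s * (inner ℝ d (ι h) : ℝ)) + s^2 * ‖ι h‖^2))
          - (1/2 * a u₁ u₁ - (inner ℝ g (ι u₁) : ℝ) + 1/(2*τ) * ‖d‖^2) := by
      field_simp
      ring
    have hstep : 0 ≤ s * ((a u₁ h - (inner ℝ g (ι h) : ℝ) + τ⁻¹ * (inner ℝ d (ι h) : ℝ))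
          + s * (((1:ℝ)/2) * a h h + (1/(2*τ)) * ‖ι h‖^2)) := by
      rw [hfact]; linarith
    exact (mul_nonneg_iff_of_pos_left hs0).mp hstep
  -- shared computation: a u₁ (u₁-u₀) - ⟨g, ι(u₁-u₀)⟩ = -τ⁻¹‖d‖²
  have hι : ι (u₁ - u₀) = d := by simp only [map_sub, hd]
  have hA : a u₁ (u₁ - u₀) - (inner ℝ g (ι (u₁ - u₀)) : ℝ) = -(τ⁻¹ * ‖d‖^2) := by
    have adm1 : 0 ≤ ι (u₁ + (u₁ - u₀) - u₁) + d := by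
      have : ι (u₁ + (u₁ - u₀) - u₁) + d = d + d := by
        rw [add_sub_cancel_left, hι]
      rw [this]; exact add_nonneg hd0 hd0
    have adm2 : 0 ≤ ι (u₀ - u₁) + d := by
      have : ι (u₀ - u₁) + d = 0 := by simp only [map_sub, hd]; abel
      rw [this]
    have k1 := key (u₁ + (u₁ - u₀)) adm1
    have k2 := key u₀ adm2
    rw [add_sub_cancel_left, hι, real_inner_self_eq_norm_sq] at k1
    have hneg : u₀ - u₁ = -(u₁ - u₀) := by abel
    rw [hneg, map_neg, map_neg, hι, inner_neg_right, inner_neg_right,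
      real_inner_self_eq_norm_sq] at k2
    rw [hι]
    linarith
  refine ⟨h0, ?_, ?_⟩
  · -- second identity
    rw [_root_.map_smul, ContinuousLinearMap.map_smul, inner_smul_right]
    simp only [smul_eq_mul]
    have hA' : τ⁻¹ * a u₁ (u₁ - u₀) - τ⁻¹ * (inner ℝ g (ι (u₁ - u₀)) : ℝ)
        = τ⁻¹ * (-(τ⁻¹ * ‖d‖^2)) := by rw [← mul_sub, hA]
    rw [hA']
    field_simp
  · -- third identity
    have hub : ∀ r ∈ {r : ℝ | ∃ z : V, 0 ≤ ι z ∧ ‖ι z‖ ≤ 1 ∧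
        r = -(a u₁ z - (inner ℝ g (ι z) : ℝ))}, r ≤ ‖τ⁻¹ • d‖ := by
      rintro r ⟨z, hz, hz1, rfl⟩
      have adm : 0 ≤ ι (u₁ + z - u₁) + d := by
        rw [add_sub_cancel_left]; exact add_nonneg hz hd0
      have hk := key (u₁ + z) adm
      rw [add_sub_cancel_left] at hk
      have hcs : (inner ℝ d (ι z) : ℝ) ≤ ‖d‖ * ‖ι z‖ := real_inner_le_norm d (ι z)
      have h1 : ‖d‖ * ‖ι z‖ ≤ ‖d‖ * 1 := mul_le_mul_of_nonneg_left hz1 (norm_nonneg d)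
      have hM : ‖τ⁻¹ • d‖ = τ⁻¹ * ‖d‖ := by
        rw [norm_smul, Real.norm_eq_abs, abs_of_pos (inv_pos.mpr hτ)]
      rw [hM]
      have : τ⁻¹ * (inner ℝ d (ι z) : ℝ) ≤ τ⁻¹ * ‖d‖ :=
        mul_le_mul_of_nonneg_left (by linarith) (inv_pos.mpr hτ).le
      linarith
    have hmem : ‖τ⁻¹ • d‖ ∈ {r : ℝ | ∃ z : V, 0 ≤ ι z ∧ ‖ι z‖ ≤ 1 ∧
        r = -(a u₁ z - (inner ℝ g (ι z) : ℝ))} := by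
      by_cases hdz : d = 0
      · exact ⟨0, by simp, by simp, by simp [hdz]⟩
      · have hnd : 0 < ‖d‖ := norm_pos_iff.mpr hdz
        refine ⟨‖d‖⁻¹ • (u₁ - u₀), ?_, ?_, ?_⟩
        · rw [_root_.map_smul, hι]
          exact lp_smul_nonneg (inv_nonneg.mpr hnd.le) hd0
        · rw [_root_.map_smul, hι, norm_smul, Real.norm_eq_abs,
            abs_of_pos (inv_pos.mpr hnd), inv_mul_cancel₀ hnd.ne']
        · rw [_root_.map_smul, ContinuousLinearMap.map_smul, inner_smul_right]
          simp only [smul_eq_mul]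
          have hval : ‖d‖⁻¹ * a u₁ (u₁ - u₀) - ‖d‖⁻¹ * (inner ℝ g (ι (u₁ - u₀)) : ℝ)
              = ‖d‖⁻¹ * (-(τ⁻¹ * ‖d‖^2)) := by rw [← mul_sub, hA]
          rw [hval, norm_smul, Real.norm_eq_abs, abs_of_pos (inv_pos.mpr hτ)]
          field_simp
    exact (IsGreatest.csSup_eq ⟨hmem, hub⟩).symm
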